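/- A 2-covariant tensor T at a point x of a Lorentzian vector space satisfies the dominant property (T(k₁,k₂) ≥ 0 for all causal future-directed vectors k₁, k₂) if and only if in every orthonormal basis its components satisfy T₀₀ ≥ |T_{ij}| for all index pairs (i,j), where the 0-index denotes the timelike component. -/

import Mathlib

/-- The Minkowski inner product of signature (+,-,...,-) on `Fin (n+1) → ℝ`,
    index `0` being the timelike component. -/
def mink (n : ℕ) (v w : Fin (n + 1) → ℝ) : ℝ :=
  v 0 * w 0 - ∑ i : Fin n, v i.succ * w i.succ

/-- A vector is causal and future directed: nonnegative Lorentzian norm and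
    positive time component (hence nonzero). -/
def causalFD (n : ℕ) (v : Fin (n + 1) → ℝ) : Prop :=
  0 ≤ mink n v v ∧ 0 < v 0

/-- An orthonormal basis of Minkowski space with `b 0` unit timelike future directed
    and the `b i`, `i ≠ 0`, unit spacelike. -/
def IsONBasis (n : ℕ) (b : Module.Basis (Fin (n + 1)) ℝ (Fin (n + 1) → ℝ)) : Prop :=
  mink n (b 0) (b 0) = 1 ∧ (∀ i, i ≠ 0 → mink n (b i) (b i) = -1) ∧
    (∀ i j, i ≠ j → mink n (b i) (b j) = 0) ∧ 0 < (b 0) 0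

def minkBL (n : ℕ) : (Fin (n + 1) → ℝ) →ₗ[ℝ] (Fin (n + 1) → ℝ) →ₗ[ℝ] ℝ :=
  LinearMap.mk₂ ℝ (mink n)
    (by intro x x' y; simp [mink, add_mul, Finset.sum_add_distrib]; ring)
    (by intro c x y; simp only [mink, Pi.smul_apply, smul_eq_mul, mul_sub, Finset.mul_sum, mul_assoc])
    (by intro x y y'; simp [mink, mul_add, Finset.sum_add_distrib]; ring)
    (by intro c x y; simp only [mink, Pi.smul_apply, smul_eq_mul, mul_sub, Finset.mul_sum]; ring_nf)

@[simp] lemma minkBL_apply (n : ℕ) (v w : Fin (n + 1) → ℝ) : minkBL n v w = mink n v w := rfl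

lemma mink_comm (n : ℕ) (v w : Fin (n + 1) → ℝ) : mink n v w = mink n w v := by
  simp [mink, mul_comm]

lemma mink_cs (n : ℕ) (v w : Fin (n + 1) → ℝ) :
    (∑ i : Fin n, v i.succ * w i.succ) ^ 2 ≤
      (∑ i : Fin n, v i.succ ^ 2) * (∑ i : Fin n, w i.succ ^ 2) := by
  simpa [pow_two] using Finset.sum_mul_sq_le_sq_mul_sq Finset.univ
    (fun i : Fin n => v i.succ) (fun i => w i.succ)

lemma mink_self (n : ℕ) (v : Fin (n + 1) → ℝ) :
    mink n v v = v 0 ^ 2 - ∑ i : Fin n, v i.succ ^ 2 := by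
  simp [mink, pow_two]

lemma eq_zero_of_causal_time_zero {n : ℕ} {v : Fin (n + 1) → ℝ}
    (hv : 0 ≤ mink n v v) (h0 : v 0 = 0) : v = 0 := by
  have hs : ∑ i : Fin n, v i.succ ^ 2 = 0 := by
    rw [mink_self, h0] at hv
    have : (0:ℝ) ≤ ∑ i : Fin n, v i.succ ^ 2 :=
      Finset.sum_nonneg fun i _ => sq_nonneg _
    nlinarith
  have := (Finset.sum_eq_zero_iff_of_nonneg (fun i _ => sq_nonneg (v i.succ))).mp hs
  funext a
  rcases Fin.eq_zero_or_eq_succ a with rfl | ⟨j, rfl⟩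
  · simpa using h0
  · have := this j (Finset.mem_univ j)
    simpa [pow_eq_zero_iff] using this

lemma mink_pos_of_timelike_fd {n : ℕ} {u v : Fin (n + 1) → ℝ}
    (hu : 0 < mink n u u) (hu0 : 0 < u 0) (hv : 0 ≤ mink n v v) (hv0 : 0 < v 0) :
    0 < mink n u v := by
  have hcs := mink_cs n u v
  have hu' := hu; rw [mink_self] at hu'
  have hv' := hv; rw [mink_self] at hv'
  rw [mink]
  have hSu : (0:ℝ) ≤ ∑ i : Fin n, u i.succ ^ 2 := Finset.sum_nonneg fun i _ => sq_nonneg _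
  have hSv : (0:ℝ) ≤ ∑ i : Fin n, v i.succ ^ 2 := Finset.sum_nonneg fun i _ => sq_nonneg _
  set P := ∑ i : Fin n, u i.succ * v i.succ with hP
  set Su := ∑ i : Fin n, u i.succ ^ 2
  set Sv := ∑ i : Fin n, v i.succ ^ 2
  have h1 : Su * Sv ≤ Su * (v 0 ^ 2) := by nlinarith
  have h2 : Su * (v 0 ^ 2) < u 0 ^ 2 * v 0 ^ 2 := by nlinarith [mul_pos hv0 hv0]
  have key : P ^ 2 < (u 0 * v 0) ^ 2 := by nlinarith
  nlinarith [mul_pos hu0 hv0]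

lemma mink_neg_neg (n : ℕ) (v : Fin (n + 1) → ℝ) : mink n (-v) (-v) = mink n v v := by
  simp [mink]

lemma time_pos_of_mink_pos {n : ℕ} {u v : Fin (n + 1) → ℝ}
    (hu : 0 < mink n u u) (hu0 : 0 < u 0) (hv : 0 ≤ mink n v v) (hvne : v ≠ 0)
    (h : 0 < mink n u v) : 0 < v 0 := by
  rcases lt_trichotomy (v 0) 0 with h0 | h0 | h0
  · have hneg : 0 < mink n u (-v) := by
      refine mink_pos_of_timelike_fd hu hu0 (by rwa [mink_neg_neg]) ?_
      simpa using by linarith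
    have : mink n u (-v) = -mink n u v := by
      simpa using map_neg (minkBL n u) v
    rw [this] at hneg; linarith
  · exact absurd (eq_zero_of_causal_time_zero hv h0) hvne
  · exact h0

lemma mink_neg_of_orth {n : ℕ} {u w : Fin (n + 1) → ℝ}
    (hu : 0 < mink n u u) (hu0 : 0 < u 0) (hw : mink n u w = 0) (hwne : w ≠ 0) :
    mink n w w < 0 := by
  by_contra hcon
  push_neg at hcon
  rcases lt_trichotomy (w 0) 0 with h0 | h0 | h0
  · have hneg : 0 < mink n u (-w) := by
      refine mink_pos_of_timelike_fd hu hu0 (by rwa [mink_neg_neg]) ?_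
      simpa using by linarith
    have : mink n u (-w) = -mink n u w := by simpa using map_neg (minkBL n u) w
    rw [this, hw] at hneg; linarith
  · exact hwne (eq_zero_of_causal_time_zero hcon h0)
  · have := mink_pos_of_timelike_fd hu hu0 hcon h0
    rw [hw] at this; exact lt_irrefl _ this

lemma mink_add_left (n : ℕ) (x x' y : Fin (n + 1) → ℝ) :
    mink n (x + x') y = mink n x y + mink n x' y := by
  simp [mink, add_mul, Finset.sum_add_distrib]; ring

lemma mink_add_right (n : ℕ) (x y y' : Fin (n + 1) → ℝ) :
    mink n x (y + y') = mink n x y + mink n x y' := by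
  simp [mink, mul_add, Finset.sum_add_distrib]; ring

lemma mink_smul_left (n : ℕ) (c : ℝ) (x y : Fin (n + 1) → ℝ) :
    mink n (c • x) y = c * mink n x y := by
  simp only [mink, Pi.smul_apply, smul_eq_mul, mul_sub, Finset.mul_sum, mul_assoc]

lemma mink_smul_right (n : ℕ) (c : ℝ) (x y : Fin (n + 1) → ℝ) :
    mink n x (c • y) = c * mink n x y := by
  rw [mink_comm, mink_smul_left, mink_comm]

lemma mink_sub_left (n : ℕ) (x x' y : Fin (n + 1) → ℝ) :
    mink n (x - x') y = mink n x y - mink n x' y := by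
  simp [mink, sub_mul, Finset.sum_sub_distrib]; ring

lemma mink_sub_right (n : ℕ) (x y y' : Fin (n + 1) → ℝ) :
    mink n x (y - y') = mink n x y - mink n x y' := by
  rw [mink_comm, mink_sub_left, mink_comm n y x, mink_comm n y' x]

/-- The auxiliary positive definite bilinear form associated to a unit timelike `u`. -/
def Jform (n : ℕ) (u : Fin (n + 1) → ℝ) : LinearMap.BilinForm ℝ (Fin (n + 1) → ℝ) :=
  LinearMap.mk₂ ℝ (fun x y => 2 * mink n x u * mink n y u - mink n x y)
    (fun x x' y => by simp only [mink_add_left]; ring)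
    (fun c x y => by simp only [mink_smul_left, smul_eq_mul]; ring)
    (fun x y y' => by simp only [mink_add_left, mink_add_right]; ring)
    (fun c x y => by simp only [mink_smul_left, mink_smul_right, smul_eq_mul]; ring)

@[simp] lemma Jform_apply (n : ℕ) (u x y : Fin (n + 1) → ℝ) :
    Jform n u x y = 2 * mink n x u * mink n y u - mink n x y := rfl

lemma Jform_isSymm (n : ℕ) (u : Fin (n + 1) → ℝ) : (Jform n u).IsSymm := by
  rw [LinearMap.BilinForm.isSymm_def]
  intro x y
  simp [mink_comm n x y]; ring

lemma Jform_posdef {n : ℕ} {u : Fin (n + 1) → ℝ} (huu : mink n u u = 1) (hu0 : 0 < u 0)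
    {x : Fin (n + 1) → ℝ} (hx : x ≠ 0) : 0 < Jform n u x x := by
  have hupos : 0 < mink n u u := by rw [huu]; norm_num
  set c := mink n x u with hc
  set w := x - c • u with hwdef
  have hw : mink n u w = 0 := by
    rw [hwdef, mink_sub_right, mink_smul_right, huu, mink_comm]; ring
  have hxw : mink n x x = c ^ 2 + mink n w w := by
    have hx' : x = w + c • u := by rw [hwdef]; abel
    rw [hx', mink_add_left, mink_add_right, mink_add_right, mink_smul_left,
      mink_smul_right, mink_smul_left, mink_smul_right, huu, mink_comm n w u, hw]
    ring
  rw [Jform_apply, ← hc, hxw]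
  by_cases hwz : w = 0
  · have hcne : c ≠ 0 := by
      intro h0
      apply hx
      have : x = w + c • u := by rw [hwdef]; abel
      rw [this, hwz, h0] at *
      simp
    rw [hwz]
    simp [mink]
    nlinarith [pow_pos (abs_pos.mpr hcne) 2, sq_abs c]
  · have := mink_neg_of_orth hupos hu0 hw hwz
    nlinarith [sq_nonneg c]

lemma fin_zero_ne_one {n : ℕ} (hn : 1 ≤ n) : (0 : Fin (n + 1)) ≠ 1 := by
  intro h
  have := congrArg Fin.val h
  simp [Fin.val_one'] at this
  omega

lemma exists_onbasis {n : ℕ} (hn : 1 ≤ n) {u s : Fin (n + 1) → ℝ}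
    (huu : mink n u u = 1) (hu0 : 0 < u 0) (hss : mink n s s = -1)
    (hus : mink n u s = 0) :
    ∃ b : Module.Basis (Fin (n + 1)) ℝ (Fin (n + 1) → ℝ),
      IsONBasis n b ∧ b 0 = u ∧ b 1 = s := by
  classical
  haveI : Invertible (2 : ℝ) := invertibleOfNonzero two_ne_zero
  have hfr : Module.finrank ℝ (Fin (n + 1) → ℝ) = n + 1 := by
    simp [Module.finrank_fin_fun]
  obtain ⟨v0, hv0⟩ := LinearMap.BilinForm.exists_orthogonal_basis (LinearMap.BilinForm.isSymm_iff.1 (Jform_isSymm n u))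
  set v : Module.Basis (Fin (n + 1)) ℝ (Fin (n + 1) → ℝ) := v0.reindex (finCongr hfr) with hv
  have hvortho : ∀ i j, i ≠ j → Jform n u (v i) (v j) = 0 := by
    intro i j hij
    rw [hv]
    simp only [Module.Basis.reindex_apply]
    exact hv0 (fun h => hij (by simpa using congrArg (finCongr hfr) h))
  have hd : ∀ i, 0 < Jform n u (v i) (v i) := fun i =>
    Jform_posdef huu hu0 (v.ne_zero i)
  set c : Module.Basis (Fin (n + 1)) ℝ (Fin (n + 1) → ℝ) :=
    v.unitsSMul (fun i => Units.mk0 (Real.sqrt (Jform n u (v i) (v i)))⁻¹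
      (by have := hd i; positivity)) with hcdef
  have hcapp : ∀ i, c i = (Real.sqrt (Jform n u (v i) (v i)))⁻¹ • v i := fun i => by
    rw [hcdef, Module.Basis.unitsSMul_apply]; rfl
  have hcc : ∀ i j, Jform n u (c i) (c j) = if i = j then 1 else 0 := by
    intro i j
    rw [hcapp, hcapp]
    simp only [map_smul, LinearMap.smul_apply, smul_eq_mul]
    by_cases hij : i = j
    · subst hij
      have h0 : (0:ℝ) < Jform n u (v i) (v i) := hd i
      have hs : Real.sqrt (Jform n u (v i) (v i)) * Real.sqrt (Jform n u (v i) (v i))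
          = Jform n u (v i) (v i) := Real.mul_self_sqrt h0.le
      have hsne : Real.sqrt (Jform n u (v i) (v i)) ≠ 0 := by positivity
      rw [if_pos rfl, ← hs]
      rw [Real.sqrt_mul_self (Real.sqrt_nonneg _)]
      rw [← mul_assoc, ← mul_inv, inv_mul_cancel₀ (mul_ne_zero hsne hsne)]
    · rw [hvortho i j hij, if_neg hij]
      simp
  have expand : ∀ x y, Jform n u x y = ∑ i, c.repr x i * c.repr y i := by
    intro x y
    conv_lhs => rw [← Module.Basis.sum_repr c x, ← Module.Basis.sum_repr c y]
    simp only [map_sum, LinearMap.sum_apply, map_smul, LinearMap.smul_apply,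
      smul_eq_mul, hcc, mul_ite, mul_one, mul_zero]
    simp only [Finset.sum_ite_eq', Finset.mem_univ, if_true]
    exact Finset.sum_congr rfl fun i _ => mul_comm _ _
  -- transfer to Euclidean space
  set E := EuclideanSpace ℝ (Fin (n + 1))
  set f : (Fin (n + 1) → ℝ) ≃ₗ[ℝ] E :=
    c.equivFun.trans (WithLp.linearEquiv 2 ℝ (Fin (n + 1) → ℝ)).symm with hf
  have hfx : ∀ x (i : Fin (n + 1)), f x i = c.repr x i := by
    intro x i; rfl
  have hinner : ∀ x y, (inner ℝ (f x) (f y) : ℝ) = Jform n u x y := by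
    intro x y
    rw [expand]
    rw [PiLp.inner_apply]
    simp [hfx]
    exact Finset.sum_congr rfl fun i _ => mul_comm _ _
  set vv : Fin (n + 1) → E := fun i => if i = 0 then f u else if i = 1 then f s else 0
    with hvv
  have h01 : (0 : Fin (n + 1)) ≠ 1 := fin_zero_ne_one hn
  have hJuu : Jform n u u u = 1 := by rw [Jform_apply, huu]; ring
  have hJus : Jform n u u s = 0 := by
    rw [Jform_apply, huu, hus, mink_comm n s u, hus]; ring
  have hJss : Jform n u s s = 1 := by
    rw [Jform_apply, hss, mink_comm n s u, hus]; ring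
  have hone : Orthonormal ℝ (Set.restrict ({0, 1} : Set (Fin (n + 1))) vv) := by
    rw [orthonormal_iff_ite]
    rintro ⟨i, hi⟩ ⟨j, hj⟩
    have hi' : i = 0 ∨ i = 1 := by simpa using hi
    have hj' : j = 0 ∨ j = 1 := by simpa using hj
    have hsub : (⟨i, hi⟩ : ({0,1} : Set (Fin (n+1)))) = ⟨j, hj⟩ ↔ i = j := Subtype.ext_iff
    rcases hi' with rfl | rfl <;> rcases hj' with rfl | rfl <;>
      simp only [Set.restrict_apply, hvv, hsub, if_pos rfl, if_neg h01, if_neg h01.symm,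
        hinner, hJuu, hJus, hJss] <;>
      simp [Set.restrict, -inner_self_eq_norm_sq_to_K, h01, h01.symm, hinner, hJuu, hJus, hJss,
        ((Jform_isSymm n u).eq u s).symm]
  have hcard : Module.finrank ℝ E = Fintype.card (Fin (n + 1)) := by
    simp [E, finrank_euclideanSpace]
  obtain ⟨B, hB⟩ := hone.exists_orthonormalBasis_extension_of_card_eq hcard
  have hB0 : B 0 = f u := by
    have := hB 0 (by simp)
    simpa [hvv] using this
  have hB1 : B 1 = f s := by
    have := hB 1 (by simp)
    simpa [hvv, h01.symm] using this
  set b : Module.Basis (Fin (n + 1)) ℝ (Fin (n + 1) → ℝ) := B.toBasis.map f.symm with hb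
  have hbi : ∀ i, b i = f.symm (B i) := by
    intro i; rw [hb]; simp
  have hb0 : b 0 = u := by rw [hbi, hB0]; exact f.symm_apply_apply u
  have hb1 : b 1 = s := by rw [hbi, hB1]; exact f.symm_apply_apply s
  have hfb : ∀ i, f (b i) = B i := by
    intro i; rw [hbi]; exact f.apply_symm_apply (B i)
  have hJb : ∀ i j, Jform n u (b i) (b j) = if i = j then 1 else 0 := by
    intro i j
    rw [← hinner, hfb, hfb]
    exact orthonormal_iff_ite.mp B.orthonormal i j
  have hbu : ∀ i, mink n (b i) u = if i = 0 then 1 else 0 := by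
    intro i
    have h := hJb i 0
    rw [hb0, Jform_apply, huu] at h
    by_cases hi : i = 0 <;> simp [hi] at h ⊢ <;> linarith
  have hmb : ∀ i j, mink n (b i) (b j) =
      2 * (if i = 0 then (1:ℝ) else 0) * (if j = 0 then (1:ℝ) else 0) -
        (if i = j then 1 else 0) := by
    intro i j
    have h := hJb i j
    rw [Jform_apply, hbu i, hbu j] at h
    linarith
  refine ⟨b, ⟨?_, ?_, ?_, ?_⟩, hb0, hb1⟩
  · rw [hmb]; norm_num
  · intro i hi; rw [hmb]; simp [hi]
  · intro i j hij
    rw [hmb]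
    rcases eq_or_ne i 0 with rfl | hi
    · have : j ≠ 0 := fun h => hij h.symm
      simp [this, hij]
    · simp [hi, hij]
  · rw [hb0]; exact hu0

lemma exists_unit_spacelike {n : ℕ} (hn : 1 ≤ n) {u : Fin (n + 1) → ℝ}
    (huu : mink n u u = 1) (hu0 : 0 < u 0) :
    ∃ s : Fin (n + 1) → ℝ, mink n s s = -1 ∧ mink n u s = 0 := by
  have hupos : 0 < mink n u u := by rw [huu]; norm_num
  have h01 : (0 : Fin (n + 1)) ≠ 1 := fin_zero_ne_one hn
  obtain ⟨x, hx⟩ : ∃ x : Fin (n + 1) → ℝ, x - mink n u x • u ≠ 0 := by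
    by_contra h
    push_neg at h
    have h1 := sub_eq_zero.mp (h (Pi.single 1 1))
    have e10 : ((Pi.single (1 : Fin (n+1)) (1:ℝ) : Fin (n+1) → ℝ)) 0 = 0 := by
      simp [Pi.single_apply, h01]
    have e11 : ((Pi.single (1 : Fin (n+1)) (1:ℝ) : Fin (n+1) → ℝ)) 1 = 1 := by simp
    have h1at0 : (0:ℝ) = mink n u (Pi.single 1 1) * u 0 := by
      have := congrFun h1 0
      simpa [e10] using this
    have hc1 : mink n u (Pi.single 1 1) = 0 := by
      rcases mul_eq_zero.mp h1at0.symm with hh | hh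
      · exact hh
      · exact absurd hh (ne_of_gt hu0)
    have h1at1 := congrFun h1 1
    rw [hc1] at h1at1
    simp [e11] at h1at1
  set w := x - mink n u x • u with hwdef
  have hworth : mink n u w = 0 := by
    rw [hwdef, mink_sub_right, mink_smul_right, huu]; ring
  have hwneg : mink n w w < 0 := mink_neg_of_orth hupos hu0 hworth hx
  set r := Real.sqrt (-mink n w w) with hr
  have hrpos : 0 < r := Real.sqrt_pos.mpr (by linarith)
  have hrr : r * r = -mink n w w := Real.mul_self_sqrt (by linarith)
  refine ⟨r⁻¹ • w, ?_, ?_⟩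
  · rw [mink_smul_left, mink_smul_right, ← mul_assoc,
      show r⁻¹ * r⁻¹ = (r * r)⁻¹ by ring, hrr]
    field_simp
    rw [div_self (ne_of_lt hwneg)]
  · rw [mink_smul_right, hworth]; ring

lemma key_timelike {n : ℕ} (hn : 1 ≤ n)
    (T : (Fin (n + 1) → ℝ) →ₗ[ℝ] (Fin (n + 1) → ℝ) →ₗ[ℝ] ℝ)
    (h : ∀ b : Module.Basis (Fin (n + 1)) ℝ (Fin (n + 1) → ℝ), IsONBasis n b →
        ∀ i j, |T (b i) (b j)| ≤ T (b 0) (b 0))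
    (k₁ k₂ : Fin (n + 1) → ℝ) (h1 : causalFD n k₁) (h1t : 0 < mink n k₁ k₁)
    (h2 : causalFD n k₂) : 0 ≤ T k₁ k₂ := by
  classical
  set cc := Real.sqrt (mink n k₁ k₁) with hccdef
  have hccpos : 0 < cc := Real.sqrt_pos.mpr h1t
  have hcc2 : cc * cc = mink n k₁ k₁ := Real.mul_self_sqrt h1t.le
  set u := cc⁻¹ • k₁ with hu
  have huu : mink n u u = 1 := by
    rw [hu, mink_smul_left, mink_smul_right, ← mul_assoc,
      show cc⁻¹ * cc⁻¹ = (cc * cc)⁻¹ by ring, hcc2]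
    field_simp
  have hupos : 0 < mink n u u := by rw [huu]; norm_num
  have hu0 : 0 < u 0 := by
    rw [hu]
    simpa using mul_pos (inv_pos.mpr hccpos) h1.2
  have hk1 : k₁ = cc • u := by
    rw [hu, smul_smul, mul_inv_cancel₀ (ne_of_gt hccpos), one_smul]
  set a := mink n u k₂ with ha
  have hapos : 0 < a := mink_pos_of_timelike_fd hupos hu0 h2.1 h2.2
  set w := k₂ - a • u with hwdef
  have hworth : mink n u w = 0 := by
    rw [hwdef, mink_sub_right, mink_smul_right, huu, ← ha]; ring
  have hww : mink n w w = mink n k₂ k₂ - a * a := by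
    have hk2 : k₂ = w + a • u := by rw [hwdef]; abel
    have hexp : mink n k₂ k₂ = mink n w w + a * (a * mink n u u)
        + a * mink n w u + a * mink n u w := by
      conv_lhs => rw [hk2]
      simp only [mink_add_left, mink_add_right, mink_smul_left, mink_smul_right]
      ring
    rw [huu, hworth, mink_comm n w u, hworth] at hexp
    linarith
  have hT00 : ∀ b : Module.Basis (Fin (n + 1)) ℝ (Fin (n + 1) → ℝ), IsONBasis n b →
      0 ≤ T (b 0) (b 0) := by
    intro b hb
    have h1' := h b hb 0 0
    have h2' := abs_nonneg (T (b 0) (b 0))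
    linarith
  by_cases hwz : w = 0
  · obtain ⟨sv, hss, hus⟩ := exists_unit_spacelike hn huu hu0
    obtain ⟨b, hb, hb0, _⟩ := exists_onbasis hn huu hu0 hss hus
    have hk2 : k₂ = a • u := by
      have h' : k₂ - a • u = 0 := hwz
      have h'' := sub_eq_zero.mp h'
      exact h''
    have hTuu : 0 ≤ T u u := by
      have := hT00 b hb
      rwa [hb0] at this
    rw [hk1, hk2]
    simp only [map_smul, LinearMap.smul_apply, smul_eq_mul]
    nlinarith [mul_nonneg (mul_nonneg hccpos.le hapos.le) hTuu]
  · have hwneg : mink n w w < 0 := mink_neg_of_orth hupos hu0 hworth hwz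
    set r := Real.sqrt (-mink n w w) with hr
    have hrpos : 0 < r := Real.sqrt_pos.mpr (by linarith)
    have hrr : r * r = -mink n w w := Real.mul_self_sqrt (by linarith)
    set sv := r⁻¹ • w with hsv
    have hss : mink n sv sv = -1 := by
      rw [hsv, mink_smul_left, mink_smul_right, ← mul_assoc,
        show r⁻¹ * r⁻¹ = (r * r)⁻¹ by ring, hrr]
      field_simp
      rw [div_self (ne_of_lt hwneg)]
    have hus : mink n u sv = 0 := by rw [hsv, mink_smul_right, hworth]; ring
    have hra : r ≤ a := by
      have h1r : r * r ≤ a * a := by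
        rw [hrr, hww]; nlinarith [h2.1]
      nlinarith
    obtain ⟨b, hb, hb0, hb1⟩ := exists_onbasis hn huu hu0 hss hus
    have hTuu : 0 ≤ T u u := by
      have := hT00 b hb
      rwa [hb0] at this
    have hTus : |T u sv| ≤ T u u := by
      have := h b hb 0 1
      rwa [hb0, hb1] at this
    have hk2 : k₂ = a • u + r • sv := by
      rw [hsv, smul_inv_smul₀ (ne_of_gt hrpos), hwdef]
      abel
    rw [hk1, hk2]
    simp only [map_add, map_smul, LinearMap.add_apply, LinearMap.smul_apply, smul_eq_mul]
    have habs := abs_le.mp hTus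
    have h1' : 0 ≤ a * T u u + r * T u sv := by nlinarith
    nlinarith [mul_nonneg hccpos.le h1']

/-- a 2-covariant tensor `T` has the dominant property iff in every
    orthonormal basis its components satisfy `T₀₀ ≥ |T_{ij}|` for all index pairs. -/
theorem dominant_property_iff_orthonormal_components (n : ℕ) (hn : 1 ≤ n)
    (T : (Fin (n + 1) → ℝ) →ₗ[ℝ] (Fin (n + 1) → ℝ) →ₗ[ℝ] ℝ) :
    (∀ k₁ k₂, causalFD n k₁ → causalFD n k₂ → 0 ≤ T k₁ k₂) ↔
      (∀ b : Module.Basis (Fin (n + 1)) ℝ (Fin (n + 1) → ℝ), IsONBasis n b →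
        ∀ i j, |T (b i) (b j)| ≤ T (b 0) (b 0)) := by
  constructor
  · intro h b hb i j
    obtain ⟨hb1, hb2, hb3, hb4⟩ := hb
    have hupos : 0 < mink n (b 0) (b 0) := by rw [hb1]; norm_num
    have hb0FD : causalFD n (b 0) := ⟨by rw [hb1]; norm_num, hb4⟩
    have hT00 : 0 ≤ T (b 0) (b 0) := h _ _ hb0FD hb0FD
    have hpm : ∀ i : Fin (n + 1), i ≠ 0 →
        causalFD n (b 0 + b i) ∧ causalFD n (b 0 - b i) := by
      intro i hi
      have hmp : mink n (b 0 + b i) (b 0 + b i) = 0 := by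
        simp only [mink_add_left, mink_add_right]
        rw [hb1, hb2 i hi, hb3 0 i (Ne.symm hi), hb3 i 0 hi]; ring
      have hmm : mink n (b 0 - b i) (b 0 - b i) = 0 := by
        simp only [mink_sub_left, mink_sub_right]
        rw [hb1, hb2 i hi, hb3 0 i (Ne.symm hi), hb3 i 0 hi]; ring
      have hnep : b 0 + b i ≠ 0 := by
        intro hc
        have hbi : b i = -(b 0) := (neg_eq_of_add_eq_zero_right hc).symm
        have : mink n (b i) (b i) = mink n (b 0) (b 0) := by
          rw [hbi, mink_neg_neg]
        rw [hb2 i hi, hb1] at this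
        norm_num at this
      have hnem : b 0 - b i ≠ 0 := by
        intro hc
        have hbi : b 0 = b i := sub_eq_zero.mp hc
        have : mink n (b i) (b i) = mink n (b 0) (b 0) := by rw [hbi]
        rw [hb2 i hi, hb1] at this
        norm_num at this
      have hip : mink n (b 0) (b 0 + b i) = 1 := by
        rw [mink_add_right, hb1, hb3 0 i (Ne.symm hi)]; ring
      have him : mink n (b 0) (b 0 - b i) = 1 := by
        rw [mink_sub_right, hb1, hb3 0 i (Ne.symm hi)]; ring
      refine ⟨⟨le_of_eq hmp.symm, ?_⟩, ⟨le_of_eq hmm.symm, ?_⟩⟩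
      · exact time_pos_of_mink_pos hupos hb4 (le_of_eq hmp.symm) hnep
          (by rw [hip]; norm_num)
      · exact time_pos_of_mink_pos hupos hb4 (le_of_eq hmm.symm) hnem
          (by rw [him]; norm_num)
    rcases eq_or_ne i 0 with rfl | hi <;> rcases eq_or_ne j 0 with rfl | hj
    · rw [abs_of_nonneg hT00]
    · have hp := h (b 0) (b 0 + b j) hb0FD (hpm j hj).1
      have hm := h (b 0) (b 0 - b j) hb0FD (hpm j hj).2
      simp only [map_add, map_sub] at hp hm
      rw [abs_le]; constructor <;> linarith
    · have hp := h (b 0 + b i) (b 0) (hpm i hi).1 hb0FD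
      have hm := h (b 0 - b i) (b 0) (hpm i hi).2 hb0FD
      simp only [map_add, map_sub, LinearMap.add_apply, LinearMap.sub_apply] at hp hm
      rw [abs_le]; constructor <;> linarith
    · have hpp := h (b 0 + b i) (b 0 + b j) (hpm i hi).1 (hpm j hj).1
      have hpm' := h (b 0 + b i) (b 0 - b j) (hpm i hi).1 (hpm j hj).2
      have hmp := h (b 0 - b i) (b 0 + b j) (hpm i hi).2 (hpm j hj).1
      have hmm := h (b 0 - b i) (b 0 - b j) (hpm i hi).2 (hpm j hj).2
      simp only [map_add, map_sub, LinearMap.add_apply, LinearMap.sub_apply]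
        at hpp hpm' hmp hmm
      rw [abs_le]; constructor <;> linarith
  · intro h k₁ k₂ h1 h2
    rcases lt_or_eq_of_le h1.1 with h1t | h1null
    · exact key_timelike hn T h k₁ k₂ h1 h1t h2
    · set u₀ : Fin (n + 1) → ℝ := Pi.single 0 1 with hu₀
      have hu₀0 : u₀ 0 = 1 := by simp [hu₀]
      have hu₀s : ∀ i : Fin n, u₀ i.succ = 0 := by
        intro i
        simp [hu₀, Pi.single_apply, Fin.succ_ne_zero]
      have hmu₀ : mink n u₀ u₀ = 1 := by
        simp [mink, hu₀0, hu₀s]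
      have hμ : mink n k₁ u₀ = k₁ 0 := by
        simp [mink, hu₀0, hu₀s]
      have hμ' : mink n u₀ k₁ = k₁ 0 := by rw [mink_comm]; exact hμ
      have hstep : ∀ ε : ℝ, 0 < ε → 0 ≤ T k₁ k₂ + ε * T u₀ k₂ := by
        intro ε hε
        have hmink : 0 < mink n (k₁ + ε • u₀) (k₁ + ε • u₀) := by
          simp only [mink_add_left, mink_add_right, mink_smul_left, mink_smul_right]
          rw [hmu₀, hμ, hμ', ← h1null]
          nlinarith [h1.2]
        have hcfd : causalFD n (k₁ + ε • u₀) := by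
          refine ⟨hmink.le, ?_⟩
          have : (k₁ + ε • u₀) 0 = k₁ 0 + ε * 1 := by
            simp [hu₀0]
          rw [this]
          nlinarith [h1.2]
        have := key_timelike hn T h _ k₂ hcfd hmink h2
        simpa [map_add, map_smul, LinearMap.add_apply, LinearMap.smul_apply,
          smul_eq_mul] using this
      rcases le_or_gt (T u₀ k₂) 0 with hC | hC
      · have := hstep 1 one_pos; linarith
      · by_contra hneg
        push_neg at hneg
        have hε : 0 < -(T k₁ k₂) / (2 * T u₀ k₂) :=
          div_pos (by linarith) (by linarith)
        have hs := hstep _ hε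
        have heq : -(T k₁ k₂) / (2 * T u₀ k₂) * T u₀ k₂ = -(T k₁ k₂) / 2 := by
          field_simp
        rw [heq] at hs
        linarith
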